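/- The Hamiltonian flow of the total angular momentum J is explicit and 2π-periodic: let m ≥ 2 and let (x₀,y₀) ∈ ℝ^m × ℝ^m satisfy W₀ := ‖x₀‖²‖y₀‖² − ⟨x₀,y₀⟩² > 0, and set J₀ = √W₀. Define the curves x(t) = cos t · x₀ + (sin t / J₀)·(‖x₀‖²·y₀ − ⟨x₀,y₀⟩·x₀) and y(t) = cos t · y₀ − (sin t / J₀)·(‖y₀‖²·x₀ − ⟨x₀,y₀⟩·y₀). Then for all t ∈ ℝ: (i) ‖x(t)‖² = ‖x₀‖², ‖y(t)‖² = ‖y₀‖² and ⟨x(t),y(t)⟩ = ⟨x₀,y₀⟩; (ii) x'(t) = (‖x(t)‖²·y(t) − ⟨x(t),y(t)⟩·x(t))/J₀ and y'(t) = −(‖y(t)‖²·x(t) − ⟨x(t),y(t)⟩·y(t))/J₀, i.e. the curve solves Hamilton's equations ẋ = ∇_y J, ẏ = −∇_x J for J(x,y) = √(‖x‖²‖y‖² − ⟨x,y⟩²); (iii) the curve is 2π-periodic: x(t + 2π) = x(t) and y(t + 2π) = y(t). -/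

import Mathlib

/-- **The Hamiltonian flow of the total angular momentum `J` is explicit and 2π-periodic.**
Let `m ≥ 2`, `(x₀,y₀) ∈ ℝ^m × ℝ^m` with `W₀ = ‖x₀‖²‖y₀‖² − ⟨x₀,y₀⟩² > 0` and `J₀ = √W₀`.
With `X t = cos t • x₀ + (sin t / J₀) • (‖x₀‖² • y₀ − ⟨x₀,y₀⟩ • x₀)` and
`Y t = cos t • y₀ − (sin t / J₀) • (‖y₀‖² • x₀ − ⟨x₀,y₀⟩ • y₀)` we have, for every `t`:
(i) the invariants `‖X t‖², ‖Y t‖², ⟨X t, Y t⟩` are constant;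
(ii) the curve solves Hamilton's equations `ẋ = ∇_y J`, `ẏ = −∇_x J` for
`J = √(‖x‖²‖y‖² − ⟨x,y⟩²)`;
(iii) the curve is `2π`-periodic. -/
theorem stmt5 (m : ℕ) (hm : 2 ≤ m) (x₀ y₀ : Fin m → ℝ)
    (ip : (Fin m → ℝ) → (Fin m → ℝ) → ℝ)
    (hip : ip = fun u v => ∑ i, u i * v i)
    (W₀ : ℝ) (hW : W₀ = ip x₀ x₀ * ip y₀ y₀ - (ip x₀ y₀) ^ 2) (hpos : 0 < W₀)
    (J₀ : ℝ) (hJ : J₀ = Real.sqrt W₀)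
    (X Y : ℝ → Fin m → ℝ)
    (hX : X = fun t => Real.cos t • x₀ +
      (Real.sin t / J₀) • (ip x₀ x₀ • y₀ - ip x₀ y₀ • x₀))
    (hY : Y = fun t => Real.cos t • y₀ -
      (Real.sin t / J₀) • (ip y₀ y₀ • x₀ - ip x₀ y₀ • y₀)) :
    ∀ t : ℝ,
      (ip (X t) (X t) = ip x₀ x₀ ∧ ip (Y t) (Y t) = ip y₀ y₀ ∧
        ip (X t) (Y t) = ip x₀ y₀) ∧
      (HasDerivAt X (J₀⁻¹ • (ip (X t) (X t) • Y t - ip (X t) (Y t) • X t)) t ∧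
        HasDerivAt Y (-(J₀⁻¹ • (ip (Y t) (Y t) • X t - ip (X t) (Y t) • Y t))) t) ∧
      (X (t + 2 * Real.pi) = X t ∧ Y (t + 2 * Real.pi) = Y t) := by
  have hJ0 : 0 < J₀ := hJ ▸ Real.sqrt_pos.mpr hpos
  have hJne : J₀ ≠ 0 := ne_of_gt hJ0
  have hJJ : J₀ * J₀ = W₀ := hJ ▸ Real.mul_self_sqrt hpos.le
  have ipal : ∀ u v w : Fin m → ℝ, ip (u + v) w = ip u w + ip v w := by
    simp [hip, add_mul, Finset.sum_add_distrib]
  have ipsl : ∀ u v w : Fin m → ℝ, ip (u - v) w = ip u w - ip v w := by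
    simp [hip, sub_mul, Finset.sum_sub_distrib]
  have ipml : ∀ (r : ℝ) (u w : Fin m → ℝ), ip (r • u) w = r * ip u w := by
    simp [hip, Finset.mul_sum, mul_assoc]
  have ipar : ∀ u v w : Fin m → ℝ, ip w (u + v) = ip w u + ip w v := by
    simp [hip, mul_add, Finset.sum_add_distrib]
  have ipsr : ∀ u v w : Fin m → ℝ, ip w (u - v) = ip w u - ip w v := by
    simp [hip, mul_sub, Finset.sum_sub_distrib]
  have ipmr : ∀ (r : ℝ) (u w : Fin m → ℝ), ip w (r • u) = r * ip w u := by
    simp [hip, Finset.mul_sum]; intro r u w; apply Finset.sum_congr rfl; intros; ring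
  have ipsymm : ip y₀ x₀ = ip x₀ y₀ := by simp [hip, mul_comm]
  intro t
  set a := ip x₀ x₀ with ha
  set b := ip y₀ y₀ with hb
  set c := ip x₀ y₀ with hc
  have hs := Real.sin_sq_add_cos_sq t
  have hJJ2 : J₀ ^ 2 = a * b - c ^ 2 := by rw [sq, hJJ, hW]
  have inv1 : ip (X t) (X t) = a := by
    simp only [hX, ipal, ipsl, ipml, ipar, ipsr, ipmr, ipsymm, ← ha, ← hb, ← hc]
    field_simp
    linear_combination a * J₀ ^ 2 * hs - a * Real.sin t ^ 2 * hJJ2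
  have inv2 : ip (Y t) (Y t) = b := by
    simp only [hY, ipal, ipsl, ipml, ipar, ipsr, ipmr, ipsymm, ← ha, ← hb, ← hc]
    field_simp
    linear_combination b * J₀ ^ 2 * hs - b * Real.sin t ^ 2 * hJJ2
  have inv3 : ip (X t) (Y t) = c := by
    simp only [hX, hY, ipal, ipsl, ipml, ipar, ipsr, ipmr, ipsymm, ← ha, ← hb, ← hc]
    field_simp
    linear_combination c * J₀ ^ 2 * hs - c * Real.sin t ^ 2 * hJJ2
  refine ⟨⟨inv1, inv2, inv3⟩, ⟨?_, ?_⟩, ?_, ?_⟩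
  · rw [inv1, inv3]
    have hd : HasDerivAt X ((-Real.sin t) • x₀ +
        (Real.cos t / J₀) • (a • y₀ - c • x₀)) t := by
      rw [hX]
      exact ((Real.hasDerivAt_cos t).smul_const x₀).add
        (((Real.hasDerivAt_sin t).div_const J₀).smul_const _)
    convert hd using 1
    simp only [hX, hY]
    match_scalars
    all_goals field_simp
    all_goals try ring
    all_goals try linear_combination Real.sin t * J₀ ^ 2 * hJJ2
    all_goals linear_combination Real.sin t * hJJ2
  · rw [inv2, inv3]
    have hd : HasDerivAt Y ((-Real.sin t) • y₀ -
        (Real.cos t / J₀) • (b • x₀ - c • y₀)) t := by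
      rw [hY]
      exact ((Real.hasDerivAt_cos t).smul_const y₀).sub
        (((Real.hasDerivAt_sin t).div_const J₀).smul_const _)
    convert hd using 1
    simp only [hX, hY]
    match_scalars
    all_goals field_simp
    all_goals try ring
    all_goals try linear_combination J₀ * Real.sin t * hJJ2
    all_goals linear_combination Real.sin t * hJJ2
  · simp [hX, Real.cos_add_two_pi, Real.sin_add_two_pi]
  · simp [hY, Real.cos_add_two_pi, Real.sin_add_two_pi]
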